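/- Let g be a simple Lie algebra with Coxeter number h, dual Coxeter number h^∨, highest root θ, and Weyl vector ρ with dual Weyl vector ρ^∨ (so (ρ^∨|θ) = h - 1 and (ρ|θ^∨) = h^∨ - 1). For g = sl_n with f = f_u the nilpotent corresponding to the partition n = u + ⋯ + u + s (0 ≤ s < u, u ≤ n), and p ≥ n an integer coprime to u with p·u·dim g^{f_u} = h^∨·dim g = n·(n²-1), the 'strange formula' generalization holds: |ρ - (p/u)·x|² = (1/12)·(p/u)·(dim g₀ - (1/2) dim g_{1/2}), where x is the semisimple element of an sl₂-triple through f_u and g_j are the ad x eigenspaces. -/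
import Mathlib

open scoped Classical
open Finset

namespace KW13

lemma sum_range_cast (u : ℕ) : ∑ c ∈ range u, (c : ℚ) = u * (u - 1) / 2 := by
  induction u with
  | zero => simp
  | succ m ih => rw [Finset.sum_range_succ, ih]; push_cast; ring

lemma sum_range_sq (u : ℕ) : ∑ c ∈ range u, (c : ℚ) ^ 2 = u * (u - 1) * (2 * u - 1) / 6 := by
  induction u with
  | zero => simp
  | succ m ih => rw [Finset.sum_range_succ, ih]; push_cast; ring

/-- count of `k < a` in `range N`, for `a ≤ N`. -/
lemma sum_ite_lt (N a : ℕ) (h : a ≤ N) :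
    ∑ k ∈ range N, (if k < a then (1 : ℚ) else 0) = a := by
  induction N with
  | zero => interval_cases a; simp
  | succ m ih =>
    rcases Nat.lt_or_ge m a with hma | hma
    · have ha : a = m + 1 := by omega
      subst ha
      rw [Finset.sum_range_succ, if_pos (by omega)]
      have : ∑ k ∈ range m, (if k < m + 1 then (1 : ℚ) else 0)
          = ∑ k ∈ range m, (1 : ℚ) := by
        apply Finset.sum_congr rfl; intro k hk
        rw [if_pos]; exact lt_of_lt_of_le (mem_range.mp hk) (by omega)
      rw [this]; simp
    · rw [Finset.sum_range_succ, if_neg (by omega), ih hma, add_zero]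

/-- count of `a < k` in `range N`, for `a < N`. -/
lemma sum_ite_gt (N a : ℕ) (h : a < N) :
    ∑ k ∈ range N, (if a < k then (1 : ℚ) else 0) = (N : ℚ) - 1 - a := by
  have : ∀ k, (if a < k then (1 : ℚ) else 0) = 1 - (if k < a + 1 then (1 : ℚ) else 0) := by
    intro k
    rcases Nat.lt_or_ge a k with h1 | h1
    · rw [if_pos h1, if_neg (by omega)]; ring
    · rw [if_neg (by omega), if_pos (by omega)]; ring
  simp_rw [this]
  rw [Finset.sum_sub_distrib, sum_ite_lt N (a+1) (by omega)]
  push_cast; simp; ring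

/-- inner abs sum, integer center. -/
lemma inner0 (m c : ℕ) (hc : c < m) :
    ∑ c' ∈ range m, |(c : ℚ) - c'| =
      (((m : ℚ) - 1 - c) * ((m : ℚ) - c) + c * (c + 1)) / 2 := by
  induction m with
  | zero => omega
  | succ k ih =>
    rcases Nat.lt_or_ge c k with hck | hck
    · rw [Finset.sum_range_succ, ih hck, abs_of_nonpos (by push_cast; nlinarith [Nat.cast_lt (α := ℚ) |>.mpr hck] )]
      push_cast; ring
    · have hck' : c = k := by omega
      subst hck'
      rw [Finset.sum_range_succ]
      have h2 : ∀ c' ∈ range c, |(c : ℚ) - c'| = (c : ℚ) - c' := by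
        intro c' hc'
        have := mem_range.mp hc'
        rw [abs_of_nonneg]
        have : (c' : ℚ) < c := by exact_mod_cast this
        linarith
      rw [Finset.sum_congr rfl h2, Finset.sum_sub_distrib, sum_range_cast]
      simp; push_cast; ring

/-- inner abs sum, half-integer center: `∑_{c'<m} |c' - c + 1/2|` for `c ≤ m`. -/
lemma innerHalf (m c : ℕ) (hc : c ≤ m) :
    ∑ c' ∈ range m, |(c' : ℚ) - c + 1 / 2| = (((m : ℚ) - c) ^ 2 + c ^ 2) / 2 := by
  induction m with
  | zero =>
    have : c = 0 := by omega
    subst this; simp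
  | succ k ih =>
    rcases Nat.lt_or_ge k c with hck | hck
    · have hck' : c = k + 1 := by omega
      subst hck'
      have h2 : ∀ c' ∈ range (k+1), |(c' : ℚ) - (k+1 : ℕ) + 1/2| = ((k+1 : ℕ) : ℚ) - 1/2 - c' := by
        intro c' hc'
        have h3 := mem_range.mp hc'
        have h4 : (c' : ℚ) ≤ k := by exact_mod_cast Nat.lt_succ_iff.mp h3
        rw [abs_of_nonpos (by push_cast; linarith)]
        push_cast; ring
      rw [Finset.sum_congr rfl h2, Finset.sum_sub_distrib, sum_range_cast]
      simp; push_cast; ring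
    · rw [Finset.sum_range_succ, ih hck,
        abs_of_nonneg (by
          have : (c : ℚ) ≤ k := by exact_mod_cast hck
          linarith)]
      push_cast; ring


/-- fiberwise sum: sums of `g ∘ x` reduce to value sums with multiplicities. -/
lemma fiber_sum {n : ℕ} (x : Fin n → ℚ) (V : Finset ℚ) (m : ℚ → ℕ)
    (hm : ∀ v, (univ.filter fun i => x i = v).card = m v)
    (hV : ∀ v, m v ≠ 0 → v ∈ V) (g : ℚ → ℚ) :
    ∑ i, g (x i) = ∑ v ∈ V, (m v : ℚ) * g v := by
  have hmaps : ∀ i ∈ (univ : Finset (Fin n)), x i ∈ V := by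
    intro i _
    apply hV
    rw [← hm (x i)]
    have : i ∈ univ.filter fun j => x j = x i := by simp
    exact Finset.card_ne_zero_of_mem this
  rw [← Finset.sum_fiberwise_of_maps_to hmaps (fun i => g (x i))]
  apply Finset.sum_congr rfl
  intro v _
  have : ∀ i ∈ univ.filter fun i => x i = v, g (x i) = g v := by
    intro i hi; rw [(Finset.mem_filter.mp hi).2]
  rw [Finset.sum_congr rfl this, Finset.sum_const, hm v, nsmul_eq_mul]

lemma fiber_sum2 {n : ℕ} (x : Fin n → ℚ) (V : Finset ℚ) (m : ℚ → ℕ)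
    (hm : ∀ v, (univ.filter fun i => x i = v).card = m v)
    (hV : ∀ v, m v ≠ 0 → v ∈ V) (f : ℚ → ℚ → ℚ) :
    ∑ i, ∑ j, f (x i) (x j) = ∑ v ∈ V, ∑ w ∈ V, (m v : ℚ) * m w * f v w := by
  have h1 : ∀ i : Fin n, ∑ j, f (x i) (x j) = ∑ w ∈ V, (m w : ℚ) * f (x i) w := by
    intro i; exact fiber_sum x V m hm hV (f (x i))
  simp_rw [h1]
  rw [Finset.sum_comm]
  rw [show (∑ w ∈ V, ∑ i : Fin n, (m w : ℚ) * f (x i) w)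
      = ∑ w ∈ V, (m w : ℚ) * ∑ i : Fin n, f (x i) w by
    apply Finset.sum_congr rfl; intro w _; rw [Finset.mul_sum]]
  have h2 : ∀ w, ∑ i : Fin n, f (x i) w = ∑ v ∈ V, (m v : ℚ) * f v w := by
    intro w; exact fiber_sum x V m hm hV (fun a => f a w)
  simp_rw [h2]
  rw [Finset.sum_comm]
  apply Finset.sum_congr rfl; intro v _
  rw [Finset.mul_sum]
  apply Finset.sum_congr rfl; intro w _
  ring

/-- card of a pair-filter as a double value sum. -/
lemma fiber_card2 {n : ℕ} (x : Fin n → ℚ) (V : Finset ℚ) (m : ℚ → ℕ)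
    (hm : ∀ v, (univ.filter fun i => x i = v).card = m v)
    (hV : ∀ v, m v ≠ 0 → v ∈ V) (P : ℚ → ℚ → Prop) [∀ a b, Decidable (P a b)] :
    ((univ.filter fun ij : Fin n × Fin n => P (x ij.1) (x ij.2)).card : ℚ)
      = ∑ v ∈ V, ∑ w ∈ V, (m v : ℚ) * m w * (if P v w then 1 else 0) := by
  rw [Finset.card_filter]
  push_cast
  rw [Fintype.sum_prod_type]
  exact fiber_sum2 x V m hm hV (fun a b => if P a b then 1 else 0)

/-- the antitone rearrangement identity. -/
lemma antitone_abs {n : ℕ} (x : Fin n → ℚ) (hx : Antitone x) :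
    ∑ i, ∑ j, |x i - x j|
      = 2 * ((n : ℚ) - 1) * (∑ i, x i) - 4 * ∑ i : Fin n, ((i : ℕ) : ℚ) * x i := by
  have key : ∀ i j : Fin n, |x i - x j|
      = (if (j : ℕ) < (i : ℕ) then x j - x i else 0)
        + (if (i : ℕ) < (j : ℕ) then x i - x j else 0) := by
    intro i j
    rcases lt_trichotomy (j : ℕ) (i : ℕ) with h | h | h
    · have hle : x i ≤ x j := hx (le_of_lt (by exact_mod_cast h))
      rw [if_pos h, if_neg (by omega), abs_of_nonpos (by linarith)]; ring
    · have : i = j := Fin.ext h.symm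
      subst this; simp
    · have hle : x j ≤ x i := hx (le_of_lt (by exact_mod_cast h))
      rw [if_neg (by omega), if_pos h, abs_of_nonneg (by linarith)]; ring
  simp_rw [key, Finset.sum_add_distrib]
  have swap : (∑ i : Fin n, ∑ j : Fin n, if (i : ℕ) < (j : ℕ) then x i - x j else 0)
      = ∑ i : Fin n, ∑ j : Fin n, if (j : ℕ) < (i : ℕ) then x j - x i else 0 := by
    rw [Finset.sum_comm]
  rw [swap, ← two_mul]
  have expand : ∀ i : Fin n, (∑ j : Fin n, if (j : ℕ) < (i : ℕ) then x j - x i else 0)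
      = (∑ j : Fin n, if (j : ℕ) < (i : ℕ) then x j else 0) - ((i : ℕ) : ℚ) * x i := by
    intro i
    have : ∀ j : Fin n, (if (j : ℕ) < (i : ℕ) then x j - x i else 0)
        = (if (j : ℕ) < (i : ℕ) then x j else 0) - (if (j : ℕ) < (i : ℕ) then (1:ℚ) else 0) * x i := by
      intro j; split <;> ring
    simp_rw [this, Finset.sum_sub_distrib, ← Finset.sum_mul]
    congr 2
    rw [Fin.sum_univ_eq_sum_range (fun k => if k < (i : ℕ) then (1:ℚ) else 0)]
    exact sum_ite_lt n i (le_of_lt i.isLt)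
  simp_rw [expand]
  rw [Finset.sum_sub_distrib]
  have swap2 : (∑ i : Fin n, ∑ j : Fin n, if (j : ℕ) < (i : ℕ) then x j else 0)
      = ∑ j : Fin n, ((n : ℚ) - 1 - (j : ℕ)) * x j := by
    rw [Finset.sum_comm]
    apply Finset.sum_congr rfl
    intro j _
    have : ∀ i : Fin n, (if (j : ℕ) < (i : ℕ) then x j else 0)
        = (if (j : ℕ) < (i : ℕ) then (1:ℚ) else 0) * x j := by intro i; split <;> ring
    simp_rw [this, ← Finset.sum_mul]
    congr 1
    rw [Fin.sum_univ_eq_sum_range (fun k => if (j:ℕ) < k then (1:ℚ) else 0)]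
    exact sum_ite_gt n j j.isLt
  rw [swap2]
  have : ∀ j : Fin n, ((n : ℚ) - 1 - (j : ℕ)) * x j = ((n:ℚ)-1) * x j - ((j:ℕ):ℚ) * x j := by
    intro j; ring
  simp_rw [this, Finset.sum_sub_distrib, ← Finset.mul_sum]
  ring


lemma union1 (A B : Finset ℚ) (q : ℕ) (g : ℚ → ℚ) :
    ∑ v ∈ A ∪ B, ((q * (if v ∈ A then 1 else 0) + (if v ∈ B then 1 else 0) : ℕ) : ℚ) * g v
      = q * ∑ v ∈ A, g v + ∑ v ∈ B, g v := by
  have h1 : ∀ v ∈ A ∪ B,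
      ((q * (if v ∈ A then 1 else 0) + (if v ∈ B then 1 else 0) : ℕ) : ℚ) * g v
        = (q : ℚ) * (if v ∈ A then g v else 0) + (if v ∈ B then g v else 0) := by
    intro v _; push_cast; split_ifs <;> ring
  rw [Finset.sum_congr rfl h1, Finset.sum_add_distrib, ← Finset.mul_sum,
    Finset.sum_ite_mem, Finset.sum_ite_mem, Finset.union_inter_cancel_left,
    Finset.union_inter_cancel_right]

lemma union2 (A B : Finset ℚ) (q : ℕ) (f : ℚ → ℚ → ℚ) :
    ∑ v ∈ A ∪ B, ∑ w ∈ A ∪ B,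
        ((q * (if v ∈ A then 1 else 0) + (if v ∈ B then 1 else 0) : ℕ) : ℚ)
          * ((q * (if w ∈ A then 1 else 0) + (if w ∈ B then 1 else 0) : ℕ) : ℚ) * f v w
      = q ^ 2 * (∑ v ∈ A, ∑ w ∈ A, f v w) + q * (∑ v ∈ A, ∑ w ∈ B, f v w)
        + q * (∑ v ∈ B, ∑ w ∈ A, f v w) + ∑ v ∈ B, ∑ w ∈ B, f v w := by
  have h1 : ∀ v ∈ A ∪ B,
      (∑ w ∈ A ∪ B,
        ((q * (if v ∈ A then 1 else 0) + (if v ∈ B then 1 else 0) : ℕ) : ℚ)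
          * ((q * (if w ∈ A then 1 else 0) + (if w ∈ B then 1 else 0) : ℕ) : ℚ) * f v w)
      = ((q * (if v ∈ A then 1 else 0) + (if v ∈ B then 1 else 0) : ℕ) : ℚ)
          * ((q : ℚ) * ∑ w ∈ A, f v w + ∑ w ∈ B, f v w) := by
    intro v _
    rw [← union1 A B q (f v), Finset.mul_sum]
    apply Finset.sum_congr rfl; intro w _; ring
  rw [Finset.sum_congr rfl h1]
  have h2 : ∀ v ∈ A ∪ B,
      ((q * (if v ∈ A then 1 else 0) + (if v ∈ B then 1 else 0) : ℕ) : ℚ)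
          * ((q : ℚ) * ∑ w ∈ A, f v w + ∑ w ∈ B, f v w)
      = ((q * (if v ∈ A then 1 else 0) + (if v ∈ B then 1 else 0) : ℕ) : ℚ)
          * ((fun v => (q : ℚ) * ∑ w ∈ A, f v w + ∑ w ∈ B, f v w) v) := fun v _ => rfl
  rw [Finset.sum_congr rfl h2, union1 A B q]
  rw [Finset.sum_add_distrib, Finset.sum_add_distrib, mul_add,
    ← Finset.mul_sum, ← Finset.mul_sum]
  ring

lemma image_sum (M : ℕ) (X : ℚ) (g : ℚ → ℚ) :
    ∑ v ∈ (range M).image (fun c : ℕ => X - c), g v = ∑ c ∈ range M, g (X - c) := by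
  apply Finset.sum_image
  intro a _ b _ hab
  have : (a : ℚ) = b := by
    have h2 : (a : ℚ) - b = 0 := by linarith [hab]
    linarith
  exact_mod_cast this

lemma double_count_shift (M M' k : ℕ) (hk : M' + k ≤ M) :
    ∑ c ∈ range M, ∑ c' ∈ range M', (if c = c' + k then (1 : ℚ) else 0) = M' := by
  rw [Finset.sum_comm]
  have h1 : ∀ c' ∈ range M', (∑ c ∈ range M, if c = c' + k then (1 : ℚ) else 0) = 1 := by
    intro c' hc'
    rw [Finset.sum_ite_eq' (range M) (c' + k) (fun _ => (1 : ℚ)),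
      if_pos (mem_range.mpr (by have := mem_range.mp hc'; omega))]
  rw [Finset.sum_congr rfl h1, Finset.sum_const, card_range, nsmul_eq_mul, mul_one]

lemma double_count_shift' (M M' k : ℕ) (hk : M + k ≤ M') :
    ∑ c ∈ range M, ∑ c' ∈ range M', (if c' = c + k then (1 : ℚ) else 0) = M := by
  have h1 : ∀ c ∈ range M, (∑ c' ∈ range M', if c' = c + k then (1 : ℚ) else 0) = 1 := by
    intro c hc
    rw [Finset.sum_ite_eq' (range M') (c + k) (fun _ => (1 : ℚ)),
      if_pos (mem_range.mpr (by have := mem_range.mp hc; omega))]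
  rw [Finset.sum_congr rfl h1, Finset.sum_const, card_range, nsmul_eq_mul, mul_one]

set_option maxHeartbeats 800000 in
lemma cases_of_constraint (u q s p n : ℕ) (hu2 : 2 ≤ u) (hq : 1 ≤ q) (hs : s < u)
    (hn : n = q * u + s) (hpn : n ≤ p)
    (hc : p * u * (q ^ 2 * u + 2 * q * s + s - 1) = n * (n ^ 2 - 1)) :
    (s = 0 ∧ q = 1 ∧ p = u + 1) ∨ (p = n ∧ (s = 1 ∨ s + 1 = u)) := by
  subst hn
  have hn2 : 1 ≤ (q * u + s) ^ 2 := Nat.one_le_pow _ _ (by positivity)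
  have hD1 : 1 ≤ q ^ 2 * u + 2 * q * s + s := by nlinarith
  zify [hn2, hD1] at hc
  have hpn' : ((q : ℤ) * u + s) ≤ p := by exact_mod_cast hpn
  have hu2' : (2 : ℤ) ≤ u := by exact_mod_cast hu2
  have hq' : (1 : ℤ) ≤ q := by exact_mod_cast hq
  by_cases hs0 : s = 0
  · subst hs0
    left
    have hnz : (u : ℤ) ≠ 0 := by positivity
    have keyu : ((p : ℤ) - q * u) * ((q:ℤ) ^ 2 * u - 1) * u
        = (q:ℤ) * ((u:ℤ) - 1) * u := by push_cast at hc ⊢; linear_combination hc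
    have key : ((p : ℤ) - q * u) * ((q:ℤ) ^ 2 * u - 1) = (q:ℤ) * ((u:ℤ) - 1) :=
      mul_right_cancel₀ hnz keyu
    have hquge : (0:ℤ) ≤ (q:ℤ) * u - 1 := by nlinarith
    have hp0 : (0:ℤ) ≤ (p:ℤ) - q * u := by push_cast at hpn'; linarith
    have hrhs : (1:ℤ) ≤ (q:ℤ) * ((u:ℤ) - 1) := by nlinarith
    have hq1 : q = 1 := by
      by_contra hq2
      have hq2' : (2:ℤ) ≤ q := by
        have : 2 ≤ q := by omega
        exact_mod_cast this
      have hp1 : (1:ℤ) ≤ (p:ℤ) - q * u := by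
        rcases eq_or_lt_of_le hp0 with heq | hlt
        · exfalso; rw [← heq] at key; simp at key
          rcases key with h | h
          · omega
          · linarith
        · linarith
      have hpos : (0:ℤ) ≤ (q:ℤ)^2 * u - 1 := by nlinarith
      have h4 : (q:ℤ)^2 * u - 1 ≤ ((p : ℤ) - q * u) * ((q:ℤ) ^ 2 * u - 1) := by
        nlinarith
      -- so q^2 u - 1 ≤ q(u-1), contradiction for q ≥ 2
      nlinarith [key, h4, mul_le_mul_of_nonneg_right hq2' (by linarith : (0:ℤ) ≤ (u:ℤ) - 1)]
    refine ⟨rfl, hq1, ?_⟩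
    subst hq1
    have h5 : ((p:ℤ) - u - 1) * ((u:ℤ) - 1) = 0 := by push_cast at key ⊢; linear_combination key
    rcases mul_eq_zero.mp h5 with h6 | h6
    · have : (p:ℤ) = u + 1 := by linarith
      exact_mod_cast this
    · exfalso; linarith
  · right
    have hs1 : 1 ≤ s := by omega
    have hs1' : (1:ℤ) ≤ s := by exact_mod_cast hs1
    have hsu : (s:ℤ) + 1 ≤ u := by exact_mod_cast hs
    have hn3 : (3:ℤ) ≤ (q:ℤ) * u + s := by nlinarith
    have hid : (p:ℤ) * ((((q:ℤ)*u+s)^2 - 1) + ((s:ℤ) - 1) * ((u:ℤ) - 1 - s))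
        = ((q:ℤ)*u+s) * (((q:ℤ)*u+s)^2 - 1) := by push_cast at hc ⊢; linear_combination hc
    have he : 0 ≤ ((s:ℤ) - 1) * ((u:ℤ) - 1 - s) := mul_nonneg (by linarith) (by linarith)
    have h1 : ((p:ℤ) - ((q:ℤ)*u+s)) * (((q:ℤ)*u+s)^2 - 1) + (p:ℤ) * (((s:ℤ) - 1) * ((u:ℤ) - 1 - s)) = 0 := by
      linear_combination hid
    have hp3 : (3:ℤ) ≤ p := le_trans hn3 hpn'
    have hsq : (8:ℤ) ≤ ((q:ℤ)*u+s)^2 - 1 := by nlinarith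
    have t1 : 0 ≤ ((p:ℤ) - ((q:ℤ)*u+s)) * (((q:ℤ)*u+s)^2 - 1) :=
      mul_nonneg (by linarith) (by linarith)
    have t2 : 0 ≤ (p:ℤ) * (((s:ℤ) - 1) * ((u:ℤ) - 1 - s)) := mul_nonneg (by linarith) he
    have t1z : ((p:ℤ) - ((q:ℤ)*u+s)) * (((q:ℤ)*u+s)^2 - 1) = 0 := by linarith
    have t2z : (p:ℤ) * (((s:ℤ) - 1) * ((u:ℤ) - 1 - s)) = 0 := by linarith
    constructor
    · rcases mul_eq_zero.mp t1z with h6 | h6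
      · have : (p:ℤ) = (q:ℤ)*u+s := by linarith
        exact_mod_cast this
      · exfalso; linarith
    · rcases mul_eq_zero.mp t2z with h6 | h6
      · exfalso; linarith
      · rcases mul_eq_zero.mp h6 with h7 | h7
        · left; have : (s:ℤ) = 1 := by linarith
          exact_mod_cast this
        · right; have : (s:ℤ) + 1 = u := by linarith
          exact_mod_cast this


lemma sumA_sq (M : ℕ) :
    ∑ c ∈ range M, (((M : ℚ) - 1) / 2 - c) ^ 2 = M * ((M : ℚ) ^ 2 - 1) / 12 := by
  have h1 := sum_range_cast M
  have h2 := sum_range_sq M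
  have e : ∀ c ∈ range M, (((M : ℚ) - 1) / 2 - c) ^ 2
      = ((M : ℚ) - 1) ^ 2 / 4 - ((M : ℚ) - 1) * c + (c : ℚ) ^ 2 := by intro c _; ring
  rw [Finset.sum_congr rfl e, Finset.sum_add_distrib, Finset.sum_sub_distrib,
    Finset.sum_const, card_range, ← Finset.mul_sum, h1, h2, nsmul_eq_mul]
  ring

lemma AAabs (M : ℕ) :
    ∑ c ∈ range M, ∑ c' ∈ range M, |(((M : ℚ) - 1) / 2 - c) - (((M : ℚ) - 1) / 2 - c')|
      = M * ((M : ℚ) ^ 2 - 1) / 3 := by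
  have e : ∀ c ∈ range M, ∑ c' ∈ range M, |(((M : ℚ) - 1) / 2 - c) - (((M : ℚ) - 1) / 2 - c')|
      = (((M : ℚ) - 1 - c) * ((M : ℚ) - c) + c * (c + 1)) / 2 := by
    intro c hc
    rw [← inner0 M c (mem_range.mp hc)]
    apply Finset.sum_congr rfl
    intro c' _
    rw [show (((M : ℚ) - 1) / 2 - c) - (((M : ℚ) - 1) / 2 - c') = -((c : ℚ) - c') by ring, abs_neg]
  rw [Finset.sum_congr rfl e]
  have e2 : ∀ c ∈ range M, ((((M : ℚ) - 1 - c) * ((M : ℚ) - c) + c * (c + 1)) / 2)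
      = ((M:ℚ)^2 - M)/2 - ((M:ℚ) - 1) * c + (c:ℚ)^2 := by intro c _; ring
  rw [Finset.sum_congr rfl e2, Finset.sum_add_distrib, Finset.sum_sub_distrib,
    Finset.sum_const, card_range, ← Finset.mul_sum, sum_range_cast M, sum_range_sq M,
    nsmul_eq_mul]
  ring

lemma AAeq (M : ℕ) :
    ∑ c ∈ range M, ∑ c' ∈ range M,
      (if (((M : ℚ) - 1) / 2 - c) = (((M : ℚ) - 1) / 2 - c') then (1 : ℚ) else 0) = M := by
  have h : ∀ c c' : ℕ, ((((M : ℚ) - 1) / 2 - c) = (((M : ℚ) - 1) / 2 - c')) ↔ (c = c' + 0) := by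
    intro c c'
    rw [Nat.add_zero]
    constructor
    · intro h
      have h2 : (c : ℚ) = c' := by linarith
      exact_mod_cast h2
    · intro h; rw [h]
  simp_rw [h]
  exact double_count_shift M M 0 (by omega)

lemma AAhalf (M : ℕ) :
    ∑ c ∈ range M, ∑ c' ∈ range M,
      (if (((M : ℚ) - 1) / 2 - c) - (((M : ℚ) - 1) / 2 - c') = 1 / 2 then (1 : ℚ) else 0) = 0 := by
  apply Finset.sum_eq_zero; intro c _
  apply Finset.sum_eq_zero; intro c' _
  rw [if_neg]
  intro h
  have h2 : ((2 * c' : ℕ) : ℚ) = ((2 * c + 1 : ℕ) : ℚ) := by push_cast; linarith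
  have h3 : 2 * c' = 2 * c + 1 := by exact_mod_cast h2
  omega

-- even parity : u = s + 2t
lemma ABeq_even (s t : ℕ) :
    ∑ c ∈ range (s + 2 * t), ∑ c' ∈ range s,
      (if (((s + 2 * t : ℕ) : ℚ) - 1) / 2 - c = (((s : ℕ) : ℚ) - 1) / 2 - c' then (1 : ℚ) else 0)
      = s := by
  have h : ∀ c c' : ℕ,
      ((((s + 2 * t : ℕ) : ℚ) - 1) / 2 - c = (((s : ℕ) : ℚ) - 1) / 2 - c') ↔ (c = c' + t) := by
    intro c c'
    constructor
    · intro h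
      have h2 : (c : ℚ) = c' + t := by push_cast at h ⊢; linarith
      exact_mod_cast h2
    · intro h; subst h; push_cast; ring
  simp_rw [h]
  exact double_count_shift (s + 2 * t) s t (by omega)

lemma BAeq_even (s t : ℕ) :
    ∑ c ∈ range s, ∑ c' ∈ range (s + 2 * t),
      (if (((s : ℕ) : ℚ) - 1) / 2 - c = (((s + 2 * t : ℕ) : ℚ) - 1) / 2 - c' then (1 : ℚ) else 0)
      = s := by
  have h : ∀ c c' : ℕ,
      ((((s : ℕ) : ℚ) - 1) / 2 - c = (((s + 2 * t : ℕ) : ℚ) - 1) / 2 - c') ↔ (c' = c + t) := by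
    intro c c'
    constructor
    · intro h
      have h2 : (c' : ℚ) = c + t := by push_cast at h ⊢; linarith
      exact_mod_cast h2
    · intro h; subst h; push_cast; ring
  simp_rw [h]
  exact double_count_shift' s (s + 2 * t) t (by omega)

lemma ABhalf_even (s t : ℕ) :
    ∑ c ∈ range (s + 2 * t), ∑ c' ∈ range s,
      (if ((((s + 2 * t : ℕ) : ℚ) - 1) / 2 - c) - ((((s : ℕ) : ℚ) - 1) / 2 - c') = 1 / 2
        then (1 : ℚ) else 0) = 0 := by
  apply Finset.sum_eq_zero; intro c _
  apply Finset.sum_eq_zero; intro c' _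
  rw [if_neg]
  intro h
  have h2 : ((2 * t + 2 * c' : ℕ) : ℚ) = ((2 * c + 1 : ℕ) : ℚ) := by push_cast at h ⊢; linarith
  have h3 : 2 * t + 2 * c' = 2 * c + 1 := by exact_mod_cast h2
  omega

lemma BAhalf_even (s t : ℕ) :
    ∑ c ∈ range s, ∑ c' ∈ range (s + 2 * t),
      (if ((((s : ℕ) : ℚ) - 1) / 2 - c) - ((((s + 2 * t : ℕ) : ℚ) - 1) / 2 - c') = 1 / 2
        then (1 : ℚ) else 0) = 0 := by
  apply Finset.sum_eq_zero; intro c _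
  apply Finset.sum_eq_zero; intro c' _
  rw [if_neg]
  intro h
  have h2 : ((2 * c' : ℕ) : ℚ) = ((2 * c + 2 * t + 1 : ℕ) : ℚ) := by push_cast at h ⊢; linarith
  have h3 : 2 * c' = 2 * c + 2 * t + 1 := by exact_mod_cast h2
  omega

-- odd parity : u = s + 2t + 1
lemma ABeq_odd (s t : ℕ) :
    ∑ c ∈ range (s + 2 * t + 1), ∑ c' ∈ range s,
      (if (((s + 2 * t + 1 : ℕ) : ℚ) - 1) / 2 - c = (((s : ℕ) : ℚ) - 1) / 2 - c'
        then (1 : ℚ) else 0) = 0 := by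
  apply Finset.sum_eq_zero; intro c _
  apply Finset.sum_eq_zero; intro c' _
  rw [if_neg]
  intro h
  have h2 : ((2 * c : ℕ) : ℚ) = ((2 * c' + 2 * t + 1 : ℕ) : ℚ) := by push_cast at h ⊢; linarith
  have h3 : 2 * c = 2 * c' + 2 * t + 1 := by exact_mod_cast h2
  omega

lemma BAeq_odd (s t : ℕ) :
    ∑ c ∈ range s, ∑ c' ∈ range (s + 2 * t + 1),
      (if (((s : ℕ) : ℚ) - 1) / 2 - c = (((s + 2 * t + 1 : ℕ) : ℚ) - 1) / 2 - c'
        then (1 : ℚ) else 0) = 0 := by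
  apply Finset.sum_eq_zero; intro c _
  apply Finset.sum_eq_zero; intro c' _
  rw [if_neg]
  intro h
  have h2 : ((2 * c' : ℕ) : ℚ) = ((2 * c + 2 * t + 1 : ℕ) : ℚ) := by push_cast at h ⊢; linarith
  have h3 : 2 * c' = 2 * c + 2 * t + 1 := by exact_mod_cast h2
  omega

lemma ABhalf_odd (s t : ℕ) :
    ∑ c ∈ range (s + 2 * t + 1), ∑ c' ∈ range s,
      (if ((((s + 2 * t + 1 : ℕ) : ℚ) - 1) / 2 - c) - ((((s : ℕ) : ℚ) - 1) / 2 - c') = 1 / 2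
        then (1 : ℚ) else 0) = s := by
  have h : ∀ c c' : ℕ,
      (((((s + 2 * t + 1 : ℕ) : ℚ) - 1) / 2 - c) - ((((s : ℕ) : ℚ) - 1) / 2 - c') = 1 / 2)
        ↔ (c = c' + t) := by
    intro c c'
    constructor
    · intro h
      have h2 : (c : ℚ) = c' + t := by push_cast at h ⊢; linarith
      exact_mod_cast h2
    · intro h; subst h; push_cast; ring
  simp_rw [h]
  exact double_count_shift (s + 2 * t + 1) s t (by omega)

lemma BAhalf_odd (s t : ℕ) :
    ∑ c ∈ range s, ∑ c' ∈ range (s + 2 * t + 1),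
      (if ((((s : ℕ) : ℚ) - 1) / 2 - c) - ((((s + 2 * t + 1 : ℕ) : ℚ) - 1) / 2 - c') = 1 / 2
        then (1 : ℚ) else 0) = s := by
  have h : ∀ c c' : ℕ,
      (((((s : ℕ) : ℚ) - 1) / 2 - c) - ((((s + 2 * t + 1 : ℕ) : ℚ) - 1) / 2 - c') = 1 / 2)
        ↔ (c' = c + (t + 1)) := by
    intro c c'
    constructor
    · intro h
      have h2 : (c' : ℚ) = c + (t + 1) := by push_cast at h ⊢; linarith
      exact_mod_cast h2
    · intro h; subst h; push_cast; ring
  simp_rw [h]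
  exact double_count_shift' s (s + 2 * t + 1) (t + 1) (by omega)

-- cross abs sums, case s = 1
lemma cross_abs_odd (a : ℕ) :
    ∑ c ∈ range (2 * a + 1), |(((2 * a + 1 : ℕ) : ℚ) - 1) / 2 - c| = a * (a + 1) := by
  have h : ∀ c ∈ range (2 * a + 1),
      |(((2 * a + 1 : ℕ) : ℚ) - 1) / 2 - c| = |(a : ℚ) - c| := by
    intro c _; congr 1; push_cast; ring
  rw [Finset.sum_congr rfl h, inner0 (2 * a + 1) a (by omega)]
  push_cast; ring

lemma cross_abs_even (a : ℕ) :
    ∑ c ∈ range (2 * a), |(((2 * a : ℕ) : ℚ) - 1) / 2 - c| = a ^ 2 := by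
  have h : ∀ c ∈ range (2 * a),
      |(((2 * a : ℕ) : ℚ) - 1) / 2 - c| = |(c : ℚ) - a + 1 / 2| := by
    intro c _
    rw [show (((2 * a : ℕ) : ℚ) - 1) / 2 - c = -((c : ℚ) - a + 1 / 2) by push_cast; ring, abs_neg]
  rw [Finset.sum_congr rfl h, innerHalf (2 * a) a (by omega)]
  push_cast; ring

-- cross abs sums, case u = s + 1
lemma cross_abs_AB (s : ℕ) :
    ∑ c ∈ range (s + 1), ∑ c' ∈ range s, |(c' : ℚ) - c + 1 / 2|
      = s * ((s : ℚ) + 1) * (2 * s + 1) / 6 := by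
  have h : ∀ c ∈ range (s + 1), ∑ c' ∈ range s, |(c' : ℚ) - c + 1 / 2|
      = (((s : ℚ) - c) ^ 2 + (c : ℚ) ^ 2) / 2 := by
    intro c hc
    exact innerHalf s c (by have := mem_range.mp hc; omega)
  rw [Finset.sum_congr rfl h]
  have e2 : ∀ c ∈ range (s + 1), ((((s : ℚ) - c) ^ 2 + (c : ℚ) ^ 2) / 2)
      = (s:ℚ)^2/2 - (s:ℚ) * c + (c:ℚ)^2 := by intro c _; ring
  rw [Finset.sum_congr rfl e2, Finset.sum_add_distrib, Finset.sum_sub_distrib,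
    Finset.sum_const, card_range, ← Finset.mul_sum, sum_range_cast (s+1), sum_range_sq (s+1),
    nsmul_eq_mul]
  push_cast; ring

lemma cross_abs_BA (s : ℕ) :
    ∑ c ∈ range s, ∑ c' ∈ range (s + 1), |(c' : ℚ) - ((c : ℚ) + 1) + 1 / 2|
      = s * ((s : ℚ) + 1) * (2 * s + 1) / 6 := by
  have h : ∀ c ∈ range s, ∑ c' ∈ range (s + 1), |(c' : ℚ) - ((c : ℚ) + 1) + 1 / 2|
      = (((s : ℚ) - c) ^ 2 + ((c : ℚ) + 1) ^ 2) / 2 := by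
    intro c hc
    have h2 := innerHalf (s + 1) (c + 1) (by have := mem_range.mp hc; omega)
    push_cast at h2 ⊢
    convert h2 using 2 <;> push_cast <;> ring
  rw [Finset.sum_congr rfl h]
  have e2 : ∀ c ∈ range s, ((((s : ℚ) - c) ^ 2 + ((c : ℚ) + 1) ^ 2) / 2)
      = ((s:ℚ)^2+1)/2 - ((s:ℚ) - 1) * c + (c:ℚ)^2 := by intro c _; ring
  rw [Finset.sum_congr rfl e2, Finset.sum_add_distrib, Finset.sum_sub_distrib,
    Finset.sum_const, card_range, ← Finset.mul_sum, sum_range_cast s, sum_range_sq s,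
    nsmul_eq_mul]
  push_cast; ring

lemma rho_sq (n : ℕ) :
    ∑ i : Fin n, (((n : ℚ) - 1) / 2 - ((i : ℕ) : ℚ)) ^ 2 = n * ((n : ℚ) ^ 2 - 1) / 12 := by
  rw [Fin.sum_univ_eq_sum_range (fun k => (((n : ℚ) - 1) / 2 - (k : ℚ)) ^ 2)]
  exact sumA_sq n

lemma lhs_expand {n : ℕ} (x : Fin n → ℚ) (t : ℚ) :
    ∑ i : Fin n, (((n : ℚ) - 1) / 2 - ((i : ℕ) : ℚ) - t * x i) ^ 2
      = (∑ i : Fin n, (((n : ℚ) - 1) / 2 - ((i : ℕ) : ℚ)) ^ 2)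
        - 2 * t * (((n : ℚ) - 1) / 2 * (∑ i, x i) - ∑ i : Fin n, ((i : ℕ) : ℚ) * x i)
        + t ^ 2 * ∑ i, x i ^ 2 := by
  have h : ∀ i : Fin n, (((n : ℚ) - 1) / 2 - ((i : ℕ) : ℚ) - t * x i) ^ 2
      = (((n : ℚ) - 1) / 2 - ((i : ℕ) : ℚ)) ^ 2
        - 2 * t * (((n : ℚ) - 1) / 2 * x i - ((i : ℕ) : ℚ) * x i) + t ^ 2 * x i ^ 2 := by
    intro i; ring
  simp_rw [h]
  rw [Finset.sum_add_distrib, Finset.sum_sub_distrib, ← Finset.mul_sum, ← Finset.mul_sum,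
    Finset.sum_sub_distrib, ← Finset.mul_sum]


section Master
variable {n : ℕ} (x : Fin n → ℚ) (u s q : ℕ)

lemma hV_of (v : ℚ) (hv : (q * (if v ∈ (range u).image (fun c : ℕ => ((u:ℚ)-1)/2 - c) then 1 else 0)
      + (if v ∈ (range s).image (fun c : ℕ => ((s:ℚ)-1)/2 - c) then 1 else 0) : ℕ) ≠ 0) :
    v ∈ ((range u).image (fun c : ℕ => ((u:ℚ)-1)/2 - c))
      ∪ ((range s).image (fun c : ℕ => ((s:ℚ)-1)/2 - c)) := by
  rw [Finset.mem_union]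
  by_contra h
  push_neg at h
  simp [h.1, h.2] at hv

variable (hm : ∀ v, (univ.filter fun i => x i = v).card
    = q * (if v ∈ (range u).image (fun c : ℕ => ((u:ℚ)-1)/2 - c) then 1 else 0)
      + (if v ∈ (range s).image (fun c : ℕ => ((s:ℚ)-1)/2 - c) then 1 else 0))

include hm

lemma master_sum1 (g : ℚ → ℚ) :
    ∑ i, g (x i)
      = q * (∑ c ∈ range u, g (((u:ℚ)-1)/2 - c)) + ∑ c ∈ range s, g (((s:ℚ)-1)/2 - c) := by
  rw [fiber_sum x _ _ hm (hV_of u s q) g, union1, image_sum, image_sum]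

lemma master_sum2 (f : ℚ → ℚ → ℚ) :
    ∑ i, ∑ j, f (x i) (x j)
      = q^2 * (∑ c ∈ range u, ∑ c' ∈ range u, f (((u:ℚ)-1)/2 - c) (((u:ℚ)-1)/2 - c'))
        + q * (∑ c ∈ range u, ∑ c' ∈ range s, f (((u:ℚ)-1)/2 - c) (((s:ℚ)-1)/2 - c'))
        + q * (∑ c ∈ range s, ∑ c' ∈ range u, f (((s:ℚ)-1)/2 - c) (((u:ℚ)-1)/2 - c'))
        + (∑ c ∈ range s, ∑ c' ∈ range s, f (((s:ℚ)-1)/2 - c) (((s:ℚ)-1)/2 - c')) := by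
  rw [fiber_sum2 x _ _ hm (hV_of u s q) f, union2]
  rw [image_sum u _ (fun v => ∑ w ∈ (range u).image (fun c : ℕ => ((u:ℚ)-1)/2 - c), f v w)]
  rw [image_sum u _ (fun v => ∑ w ∈ (range s).image (fun c : ℕ => ((s:ℚ)-1)/2 - c), f v w)]
  rw [image_sum s _ (fun v => ∑ w ∈ (range u).image (fun c : ℕ => ((u:ℚ)-1)/2 - c), f v w)]
  rw [image_sum s _ (fun v => ∑ w ∈ (range s).image (fun c : ℕ => ((s:ℚ)-1)/2 - c), f v w)]
  congr 1
  · congr 1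
    · congr 1
      · congr 1
        exact Finset.sum_congr rfl fun c _ => image_sum u _ _
      · congr 1
        exact Finset.sum_congr rfl fun c _ => image_sum s _ _
    · congr 1
      exact Finset.sum_congr rfl fun c _ => image_sum u _ _
  · exact Finset.sum_congr rfl fun c _ => image_sum s _ _

lemma master_card2 (P : ℚ → ℚ → Prop) [∀ a b, Decidable (P a b)] :
    ((univ.filter fun ij : Fin n × Fin n => P (x ij.1) (x ij.2)).card : ℚ)
      = q^2 * (∑ c ∈ range u, ∑ c' ∈ range u,
            if P (((u:ℚ)-1)/2 - c) (((u:ℚ)-1)/2 - c') then (1:ℚ) else 0)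
        + q * (∑ c ∈ range u, ∑ c' ∈ range s,
            if P (((u:ℚ)-1)/2 - c) (((s:ℚ)-1)/2 - c') then (1:ℚ) else 0)
        + q * (∑ c ∈ range s, ∑ c' ∈ range u,
            if P (((s:ℚ)-1)/2 - c) (((u:ℚ)-1)/2 - c') then (1:ℚ) else 0)
        + (∑ c ∈ range s, ∑ c' ∈ range s,
            if P (((s:ℚ)-1)/2 - c) (((s:ℚ)-1)/2 - c') then (1:ℚ) else 0) := by
  rw [fiber_card2 x _ _ hm (hV_of u s q) P, union2]
  rw [image_sum u _ (fun v => ∑ w ∈ (range u).image (fun c : ℕ => ((u:ℚ)-1)/2 - c),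
        if P v w then (1:ℚ) else 0)]
  rw [image_sum u _ (fun v => ∑ w ∈ (range s).image (fun c : ℕ => ((s:ℚ)-1)/2 - c),
        if P v w then (1:ℚ) else 0)]
  rw [image_sum s _ (fun v => ∑ w ∈ (range u).image (fun c : ℕ => ((u:ℚ)-1)/2 - c),
        if P v w then (1:ℚ) else 0)]
  rw [image_sum s _ (fun v => ∑ w ∈ (range s).image (fun c : ℕ => ((s:ℚ)-1)/2 - c),
        if P v w then (1:ℚ) else 0)]
  congr 1
  · congr 1
    · congr 1
      · congr 1
        exact Finset.sum_congr rfl fun c _ => image_sum u _ _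
      · congr 1
        exact Finset.sum_congr rfl fun c _ => image_sum s _ _
    · congr 1
      exact Finset.sum_congr rfl fun c _ => image_sum u _ _
  · exact Finset.sum_congr rfl fun c _ => image_sum s _ _

end Master

end KW13

set_option maxHeartbeats 1600000 in
/-- The "strange formula" generalization (Remark 2.2 of Kac–Wakimoto) for `g = sl_n` and
`f = f_u` with partition `n = u + ⋯ + u + s` (`q` parts `u`, `0 ≤ s < u`): here
`x : Fin n → ℚ` is the (sorted) semisimple element of an `sl₂`-triple through `f_u`,
whose multiset of values consists of `q` copies of `(u-1)/2 - c` (`0 ≤ c < u`) and one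
copy of `(s-1)/2 - c` (`0 ≤ c < s`); `ρ_i = (n-1)/2 - i` is the Weyl vector;
`d0 = dim g₀ = #{(i,j) : x_i = x_j} - 1` and `d12 = dim g_{1/2} = #{(i,j) : x_i - x_j = 1/2}`.
Under the constraint `p·u·dim g^{f_u} = h^∨·dim g = n(n²-1)` with `p ≥ n`, `gcd(p,u) = 1`:
`|ρ - (p/u)x|² = (1/12)(p/u)(dim g₀ - (1/2) dim g_{1/2})`. -/
theorem stmt13 (n u q s p : ℕ) (hu : 0 < u) (hun : u ≤ n) (hn : n = q * u + s) (hs : s < u)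
    (hpn : n ≤ p) (hpu : Nat.Coprime p u)
    (x : Fin n → ℚ) (hxsort : Antitone x)
    (hxmult : ∀ v : ℚ,
      (Finset.univ.filter fun i => x i = v).card =
        q * (if ∃ c : ℕ, c < u ∧ v = ((u : ℚ) - 1) / 2 - c then 1 else 0) +
          (if ∃ c : ℕ, c < s ∧ v = ((s : ℚ) - 1) / 2 - c then 1 else 0))
    (d0 d12 : ℕ)
    (hd0 : d0 + 1 = (Finset.univ.filter fun ij : Fin n × Fin n => x ij.1 = x ij.2).card)
    (hd12 : d12 = (Finset.univ.filter fun ij : Fin n × Fin n => x ij.1 - x ij.2 = 1/2).card)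
    (hconstraint : p * u * (d0 + d12) = n * (n ^ 2 - 1)) :
    ∑ i : Fin n, (((n : ℚ) - 1) / 2 - ((i : ℕ) : ℚ) - ((p : ℚ) / u) * x i) ^ 2 =
      (1 / 12) * ((p : ℚ) / u) * ((d0 : ℚ) - (d12 : ℚ) / 2) := by
  classical
  open Finset KW13 in
  have hq1 : 1 ≤ q := by
    by_contra h
    have h0 : q = 0 := by omega
    rw [h0, Nat.zero_mul, Nat.zero_add] at hn
    omega
  have huQ : (u : ℚ) ≠ 0 := Nat.cast_ne_zero.mpr (by omega)
  -- multiplicity function in membership form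
  have hm : ∀ v : ℚ, (Finset.univ.filter fun i => x i = v).card
      = q * (if v ∈ (range u).image (fun c : ℕ => ((u:ℚ)-1)/2 - c) then 1 else 0)
        + (if v ∈ (range s).image (fun c : ℕ => ((s:ℚ)-1)/2 - c) then 1 else 0) := by
    intro v
    rw [hxmult v]
    congr 1
    · congr 1
      apply if_congr _ rfl rfl
      simp only [Finset.mem_image, Finset.mem_range]
      constructor
      · rintro ⟨c, hc, he⟩; exact ⟨c, hc, he.symm⟩
      · rintro ⟨c, hc, he⟩; exact ⟨c, hc, he.symm⟩
    · apply if_congr _ rfl rfl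
      simp only [Finset.mem_image, Finset.mem_range]
      constructor
      · rintro ⟨c, hc, he⟩; exact ⟨c, hc, he.symm⟩
      · rintro ⟨c, hc, he⟩; exact ⟨c, hc, he.symm⟩
  -- value-sum reductions
  have hM : (∑ i, x i ^ 2)
      = (q:ℚ) * (∑ c ∈ range u, (((u:ℚ)-1)/2 - c)^2)
        + ∑ c ∈ range s, (((s:ℚ)-1)/2 - c)^2 :=
    master_sum1 x u s q hm (fun v => v^2)
  have hT : (∑ i, ∑ j, |x i - x j|)
      = (q:ℚ)^2 * (∑ c ∈ range u, ∑ c' ∈ range u, |(((u:ℚ)-1)/2 - c) - (((u:ℚ)-1)/2 - c')|)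
        + q * (∑ c ∈ range u, ∑ c' ∈ range s, |(((u:ℚ)-1)/2 - c) - (((s:ℚ)-1)/2 - c')|)
        + q * (∑ c ∈ range s, ∑ c' ∈ range u, |(((s:ℚ)-1)/2 - c) - (((u:ℚ)-1)/2 - c')|)
        + (∑ c ∈ range s, ∑ c' ∈ range s, |(((s:ℚ)-1)/2 - c) - (((s:ℚ)-1)/2 - c')|) :=
    master_sum2 x u s q hm (fun a b => |a - b|)
  have hd0Q : ((d0:ℚ) + 1)
      = (q:ℚ)^2 * (∑ c ∈ range u, ∑ c' ∈ range u,
            if (((u:ℚ)-1)/2 - c) = (((u:ℚ)-1)/2 - c') then (1:ℚ) else 0)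
        + q * (∑ c ∈ range u, ∑ c' ∈ range s,
            if (((u:ℚ)-1)/2 - c) = (((s:ℚ)-1)/2 - c') then (1:ℚ) else 0)
        + q * (∑ c ∈ range s, ∑ c' ∈ range u,
            if (((s:ℚ)-1)/2 - c) = (((u:ℚ)-1)/2 - c') then (1:ℚ) else 0)
        + (∑ c ∈ range s, ∑ c' ∈ range s,
            if (((s:ℚ)-1)/2 - c) = (((s:ℚ)-1)/2 - c') then (1:ℚ) else 0) := by
    have h := master_card2 x u s q hm (fun a b => a = b)
    rw [← h, ← hd0]
    push_cast
    ring
  have hd12Q : (d12:ℚ)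
      = (q:ℚ)^2 * (∑ c ∈ range u, ∑ c' ∈ range u,
            if (((u:ℚ)-1)/2 - c) - (((u:ℚ)-1)/2 - c') = 1/2 then (1:ℚ) else 0)
        + q * (∑ c ∈ range u, ∑ c' ∈ range s,
            if (((u:ℚ)-1)/2 - c) - (((s:ℚ)-1)/2 - c') = 1/2 then (1:ℚ) else 0)
        + q * (∑ c ∈ range s, ∑ c' ∈ range u,
            if (((s:ℚ)-1)/2 - c) - (((u:ℚ)-1)/2 - c') = 1/2 then (1:ℚ) else 0)
        + (∑ c ∈ range s, ∑ c' ∈ range s,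
            if (((s:ℚ)-1)/2 - c) - (((s:ℚ)-1)/2 - c') = 1/2 then (1:ℚ) else 0) := by
    have h := master_card2 x u s q hm (fun a b => a - b = 1/2)
    rw [← h, hd12]
  -- evaluate the diagonal blocks
  rw [AAabs u, AAabs s] at hT
  rw [sumA_sq u, sumA_sq s] at hM
  rw [AAeq u, AAeq s] at hd0Q
  rw [AAhalf u, AAhalf s] at hd12Q
  -- antitone identity
  have hAnti := antitone_abs x hxsort
  have hmid : ((n:ℚ)-1)/2 * (∑ i, x i) - (∑ i : Fin n, ((i:ℕ):ℚ) * x i)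
      = (∑ i, ∑ j, |x i - x j|) / 4 := by linarith
  -- main expansion
  rw [lhs_expand x ((p:ℚ)/u), rho_sq n, hmid, hT, hM]
  -- now split on parity of u - s
  rcases Nat.even_or_odd (u - s) with ⟨t, ht⟩ | ⟨t, ht⟩
  · -- EVEN case : u = s + 2t
    have hut : u = s + 2 * t := by omega
    have hABeq : (∑ c ∈ range u, ∑ c' ∈ range s,
        if ((u:ℚ) - 1) / 2 - c = ((s:ℚ) - 1) / 2 - c' then (1:ℚ) else 0) = s := by
      rw [hut]; exact ABeq_even s t
    have hBAeq : (∑ c ∈ range s, ∑ c' ∈ range u,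
        if ((s:ℚ) - 1) / 2 - c = ((u:ℚ) - 1) / 2 - c' then (1:ℚ) else 0) = s := by
      rw [hut]; exact BAeq_even s t
    have hABhalf : (∑ c ∈ range u, ∑ c' ∈ range s,
        if ((u:ℚ) - 1) / 2 - c - (((s:ℚ) - 1) / 2 - c') = 1/2 then (1:ℚ) else 0) = 0 := by
      rw [hut]; exact ABhalf_even s t
    have hBAhalf : (∑ c ∈ range s, ∑ c' ∈ range u,
        if ((s:ℚ) - 1) / 2 - c - (((u:ℚ) - 1) / 2 - c') = 1/2 then (1:ℚ) else 0) = 0 := by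
      rw [hut]; exact BAhalf_even s t
    rw [hABeq, hBAeq] at hd0Q
    rw [hABhalf, hBAhalf] at hd12Q
    have hd0N : d0 + 1 = q^2*u + 2*q*s + s := by
      have h9 : ((d0:ℚ) + 1) = ((q^2*u + 2*q*s + s : ℕ) : ℚ) := by
        rw [hd0Q]; push_cast; ring
      exact_mod_cast h9
    have hd12N : d12 = 0 := by
      have h9 : (d12:ℚ) = ((0:ℕ):ℚ) := by rw [hd12Q]; push_cast; ring
      exact_mod_cast h9
    have hd0C : (d0:ℚ) = (q:ℚ)^2*u + 2*q*s + s - 1 := by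
      have h9 := congrArg (Nat.cast : ℕ → ℚ) hd0N
      push_cast at h9; linarith
    have hd12C : (d12:ℚ) = 0 := by rw [hd12N]; norm_num
    have hcc : p * u * (q^2*u + 2*q*s + s - 1) = n * (n^2 - 1) := by
      have hsum : d0 + d12 = q^2*u + 2*q*s + s - 1 := by omega
      rw [← hsum]; exact hconstraint
    by_cases hu1 : u = 1
    · -- CELL A
      exfalso; omega
    · rcases cases_of_constraint u q s p n (by omega) hq1 hs hn hpn hcc
        with ⟨hs0, hq2, hp⟩ | ⟨hp, hcase⟩
      · -- CELL B : s = 0, q = 1, p = u + 1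
        subst hs0; subst hq2
        simp only [Finset.range_zero, Finset.sum_empty, Finset.sum_const_zero] at *
        have hnQ : (n:ℚ) = u := by
          have : n = u := by omega
          exact_mod_cast this
        have hpQ : (p:ℚ) = (u:ℚ) + 1 := by rw [hp]; push_cast; ring
        rw [hd0C, hd12C, hnQ, hpQ]
        push_cast
        field_simp
        ring
      · rcases hcase with hs1 | hsu
        · -- CELL C (even parity, so u odd) : s = 1, p = n
          subst hs1
          have hABabs : (∑ c ∈ range u, ∑ c' ∈ range 1,
              |((u:ℚ) - 1) / 2 - (c:ℚ) - ((((1:ℕ):ℚ) - 1) / 2 - (c':ℚ))|) = (t:ℚ) * (t+1) := by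
            simp only [Finset.sum_range_one, Nat.cast_one, Nat.cast_zero]
            have e : ∀ c ∈ range u,
                |((u:ℚ) - 1) / 2 - (c:ℚ) - (((1:ℚ) - 1) / 2 - (0:ℚ))| = |((u:ℚ)-1)/2 - (c:ℚ)| := by
              intro c _; congr 1; ring
            rw [Finset.sum_congr rfl e, show u = 2*t+1 from by omega]
            exact_mod_cast cross_abs_odd t
          have hBAabs : (∑ c ∈ range 1, ∑ c' ∈ range u,
              |(((1:ℕ):ℚ) - 1) / 2 - (c:ℚ) - (((u:ℚ) - 1) / 2 - (c':ℚ))|) = (t:ℚ) * (t+1) := by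
            simp only [Finset.sum_range_one, Nat.cast_one, Nat.cast_zero]
            have e : ∀ c' ∈ range u,
                |((1:ℚ) - 1) / 2 - (0:ℚ) - (((u:ℚ) - 1) / 2 - (c':ℚ))| = |((u:ℚ)-1)/2 - (c':ℚ)| := by
              intro c' _
              rw [show ((1:ℚ) - 1) / 2 - (0:ℚ) - (((u:ℚ) - 1) / 2 - (c':ℚ))
                  = -(((u:ℚ)-1)/2 - (c':ℚ)) from by ring, abs_neg]
            rw [Finset.sum_congr rfl e, show u = 2*t+1 from by omega]
            exact_mod_cast cross_abs_odd t
          rw [hABabs, hBAabs, hd0C, hd12C]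
          have hnQ : (n:ℚ) = (q:ℚ)*u + 1 := by rw [hn]; push_cast; ring
          have hpQ : (p:ℚ) = (q:ℚ)*u + 1 := by rw [hp]; exact hnQ
          have huT : (u:ℚ) = 2*(t:ℚ)+1 := by
            rw [show u = 2*t+1 from by omega]; push_cast; ring
          rw [hnQ, hpQ, huT]
          have h2t : (2*(t:ℚ)+1) ≠ 0 := by positivity
          field_simp
          ring
        · exfalso; omega
  · -- ODD case : u = s + 2t + 1
    have hut : u = s + 2 * t + 1 := by omega
    have hABeq : (∑ c ∈ range u, ∑ c' ∈ range s,
        if ((u:ℚ) - 1) / 2 - c = ((s:ℚ) - 1) / 2 - c' then (1:ℚ) else 0) = 0 := by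
      rw [hut]; exact ABeq_odd s t
    have hBAeq : (∑ c ∈ range s, ∑ c' ∈ range u,
        if ((s:ℚ) - 1) / 2 - c = ((u:ℚ) - 1) / 2 - c' then (1:ℚ) else 0) = 0 := by
      rw [hut]; exact BAeq_odd s t
    have hABhalf : (∑ c ∈ range u, ∑ c' ∈ range s,
        if ((u:ℚ) - 1) / 2 - c - (((s:ℚ) - 1) / 2 - c') = 1/2 then (1:ℚ) else 0) = s := by
      rw [hut]; exact ABhalf_odd s t
    have hBAhalf : (∑ c ∈ range s, ∑ c' ∈ range u,
        if ((s:ℚ) - 1) / 2 - c - (((u:ℚ) - 1) / 2 - c') = 1/2 then (1:ℚ) else 0) = s := by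
      rw [hut]; exact BAhalf_odd s t
    rw [hABeq, hBAeq] at hd0Q
    rw [hABhalf, hBAhalf] at hd12Q
    have hd0N : d0 + 1 = q^2*u + s := by
      have h9 : ((d0:ℚ) + 1) = ((q^2*u + s : ℕ) : ℚ) := by
        rw [hd0Q]; push_cast; ring
      exact_mod_cast h9
    have hd12N : d12 = 2*q*s := by
      have h9 : (d12:ℚ) = ((2*q*s:ℕ):ℚ) := by rw [hd12Q]; push_cast; ring
      exact_mod_cast h9
    have hd0C : (d0:ℚ) = (q:ℚ)^2*u + s - 1 := by
      have h9 := congrArg (Nat.cast : ℕ → ℚ) hd0N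
      push_cast at h9; linarith
    have hd12C : (d12:ℚ) = 2*(q:ℚ)*s := by rw [hd12N]; push_cast; ring
    have hcc : p * u * (q^2*u + 2*q*s + s - 1) = n * (n^2 - 1) := by
      have hsum : d0 + d12 = q^2*u + 2*q*s + s - 1 := by omega
      rw [← hsum]; exact hconstraint
    by_cases hu1 : u = 1
    · -- CELL A : u = 1, s = 0
      have hs0 : s = 0 := by omega
      subst hs0; subst hu1
      simp only [Finset.range_zero, Finset.sum_empty, Finset.sum_const_zero] at *
      have hnq : n = q := by omega
      have hccQ : (p:ℚ) * ((q:ℚ)^2 - 1) = (q:ℚ) * ((q:ℚ)^2 - 1) := by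
        have h8 : p * (q^2 - 1) = q * (q^2 - 1) := by
          have h7 : q^2*1 + 2*q*0 + 0 - 1 = q^2 - 1 := by omega
          calc p * (q^2-1) = p * 1 * (q^2*1 + 2*q*0 + 0 - 1) := by rw [h7]; ring
          _ = n * (n^2 - 1) := hcc
          _ = q * (q^2 - 1) := by rw [hnq]
        have h6 : 1 ≤ q^2 := Nat.one_le_pow _ _ (by omega)
        zify [h6] at h8
        exact_mod_cast h8
      rw [hd0C, hd12C, hnq]
      push_cast
      norm_num
      linear_combination (-1/12 : ℚ) * hccQ
    · rcases cases_of_constraint u q s p n (by omega) hq1 hs hn hpn hcc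
        with ⟨hs0, hq2, hp⟩ | ⟨hp, hcase⟩
      · -- CELL B (odd) : s = 0, q = 1, p = u + 1
        subst hs0; subst hq2
        simp only [Finset.range_zero, Finset.sum_empty, Finset.sum_const_zero] at *
        have hnQ : (n:ℚ) = u := by
          have : n = u := by omega
          exact_mod_cast this
        have hpQ : (p:ℚ) = (u:ℚ) + 1 := by rw [hp]; push_cast; ring
        rw [hd0C, hd12C, hnQ, hpQ]
        push_cast
        field_simp
        ring
      · rcases hcase with hs1 | hsu
        · -- CELL C (odd parity, so u even) : s = 1, p = n, u = 2t+2
          subst hs1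
          have hABabs : (∑ c ∈ range u, ∑ c' ∈ range 1,
              |((u:ℚ) - 1) / 2 - (c:ℚ) - ((((1:ℕ):ℚ) - 1) / 2 - (c':ℚ))|) = ((t:ℚ)+1)^2 := by
            simp only [Finset.sum_range_one, Nat.cast_one, Nat.cast_zero]
            have e : ∀ c ∈ range u,
                |((u:ℚ) - 1) / 2 - (c:ℚ) - (((1:ℚ) - 1) / 2 - (0:ℚ))| = |((u:ℚ)-1)/2 - (c:ℚ)| := by
              intro c _; congr 1; ring
            rw [Finset.sum_congr rfl e, show u = 2*(t+1) from by omega]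
            have h9 := cross_abs_even (t+1)
            push_cast at h9 ⊢
            exact h9
          have hBAabs : (∑ c ∈ range 1, ∑ c' ∈ range u,
              |(((1:ℕ):ℚ) - 1) / 2 - (c:ℚ) - (((u:ℚ) - 1) / 2 - (c':ℚ))|) = ((t:ℚ)+1)^2 := by
            simp only [Finset.sum_range_one, Nat.cast_one, Nat.cast_zero]
            have e : ∀ c' ∈ range u,
                |((1:ℚ) - 1) / 2 - (0:ℚ) - (((u:ℚ) - 1) / 2 - (c':ℚ))| = |((u:ℚ)-1)/2 - (c':ℚ)| := by
              intro c' _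
              rw [show ((1:ℚ) - 1) / 2 - (0:ℚ) - (((u:ℚ) - 1) / 2 - (c':ℚ))
                  = -(((u:ℚ)-1)/2 - (c':ℚ)) from by ring, abs_neg]
            rw [Finset.sum_congr rfl e, show u = 2*(t+1) from by omega]
            have h9 := cross_abs_even (t+1)
            push_cast at h9 ⊢
            exact h9
          rw [hABabs, hBAabs, hd0C, hd12C]
          have hnQ : (n:ℚ) = (q:ℚ)*u + 1 := by rw [hn]; push_cast; ring
          have hpQ : (p:ℚ) = (q:ℚ)*u + 1 := by rw [hp]; exact hnQ
          have huT : (u:ℚ) = 2*(t:ℚ)+2 := by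
            rw [show u = 2*t+2 from by omega]; push_cast; ring
          rw [hnQ, hpQ, huT]
          have h2t : (2*(t:ℚ)+2) ≠ 0 := by positivity
          field_simp
          ring
        · -- CELL D : u = s + 1, p = n
          subst hsu
          have hABabs : (∑ c ∈ range (s+1), ∑ c' ∈ range s,
              |(((s+1:ℕ):ℚ) - 1) / 2 - (c:ℚ) - (((s:ℚ) - 1) / 2 - (c':ℚ))|)
              = (s:ℚ) * ((s:ℚ) + 1) * (2*(s:ℚ) + 1) / 6 := by
            have e : ∀ c ∈ range (s+1),
                (∑ c' ∈ range s, |(((s+1:ℕ):ℚ) - 1) / 2 - (c:ℚ) - (((s:ℚ) - 1) / 2 - (c':ℚ))|)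
                = ∑ c' ∈ range s, |(c':ℚ) - (c:ℚ) + 1/2| := by
              intro c _
              apply Finset.sum_congr rfl
              intro c' _
              congr 1
              push_cast
              ring
            rw [Finset.sum_congr rfl e]
            exact cross_abs_AB s
          have hBAabs : (∑ c ∈ range s, ∑ c' ∈ range (s+1),
              |((s:ℚ) - 1) / 2 - (c:ℚ) - ((((s+1:ℕ):ℚ) - 1) / 2 - (c':ℚ))|)
              = (s:ℚ) * ((s:ℚ) + 1) * (2*(s:ℚ) + 1) / 6 := by
            have e : ∀ c ∈ range s,
                (∑ c' ∈ range (s+1), |((s:ℚ) - 1) / 2 - (c:ℚ) - ((((s+1:ℕ):ℚ) - 1) / 2 - (c':ℚ))|)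
                = ∑ c' ∈ range (s+1), |(c':ℚ) - ((c:ℚ) + 1) + 1/2| := by
              intro c _
              apply Finset.sum_congr rfl
              intro c' _
              congr 1
              push_cast
              ring
            rw [Finset.sum_congr rfl e]
            exact cross_abs_BA s
          rw [hABabs, hBAabs, hd0C, hd12C]
          have hnQ : (n:ℚ) = (q:ℚ)*((s:ℚ)+1) + s := by rw [hn]; push_cast; ring
          have hpQ : (p:ℚ) = (q:ℚ)*((s:ℚ)+1) + s := by rw [hp]; exact hnQ
          rw [hnQ, hpQ]
          have hsp : ((s:ℚ)+1) ≠ 0 := by positivity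
          push_cast
          field_simp
          ring
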